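/- For every (x,y) ∈ ℝ² with x ≤ 0 and y ≥ 0 (i.e. (x,y) ∈ R₁), both f(x,y) and f⁻¹(x,y) are defined, and neither f(x,y) nor f⁻¹(x,y) lies in the interior int R₁ = (-∞,0)×(0,∞) of R₁. In particular no real orbit of f can stay in int R₁ for two consecutive times. -/
import Mathlib


open Filter

/-- The birational map f(x,y) = (y(x+a)/(x-1), x+a-1). -/
noncomputable def birat (a : ℝ) (p : ℝ × ℝ) : ℝ × ℝ :=
  (p.2 * (p.1 + a) / (p.1 - 1), p.1 + a - 1)

/-- The inverse map f⁻¹(x,y) = (y+1-a, x(y-a)/(y+1)). -/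
noncomputable def biratInv (a : ℝ) (p : ℝ × ℝ) : ℝ × ℝ :=
  (p.2 + 1 - a, p.1 * (p.2 - a) / (p.2 + 1))

/-- The forward orbit of `p` is defined up to time `n`. -/
def orbitDefined (a : ℝ) (p : ℝ × ℝ) (n : ℕ) : Prop :=
  ∀ k < n, ((birat a)^[k] p).1 ≠ 1

def Rplus : Set (ℝ × ℝ) := {p | p.1 ≤ 1 ∧ p.2 ≤ 0}
def Rminus : Set (ℝ × ℝ) := {p | 0 ≤ p.1 ∧ -1 ≤ p.2}
def Rzero : Set (ℝ × ℝ) := {p | 1 ≤ p.1 ∧ p.2 ≤ -1}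
def Rone : Set (ℝ × ℝ) := {p | p.1 ≤ 0 ∧ 0 ≤ p.2}
def intRplus : Set (ℝ × ℝ) := {p | p.1 < 1 ∧ p.2 < 0}
def intRzero : Set (ℝ × ℝ) := {p | 1 < p.1 ∧ p.2 < -1}
def intRone : Set (ℝ × ℝ) := {p | p.1 < 0 ∧ 0 < p.2}

/-- `Rw 0 = R₀`, `Rw 1 = R₁`. -/
def Rw (i : Fin 2) : Set (ℝ × ℝ) := if i = 0 then Rzero else Rone

/-- `intRw 0 = int R₀`, `intRw 1 = int R₁`. -/
def intRw (i : Fin 2) : Set (ℝ × ℝ) := if i = 0 then intRzero else intRone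

/-- Euclidean distance on ℝ². -/
noncomputable def eucDist (p q : ℝ × ℝ) : ℝ :=
  Real.sqrt ((p.1 - q.1) ^ 2 + (p.2 - q.2) ^ 2)

theorem stmt2 (a : ℝ) (ha : a < -1) (x y : ℝ) (hx : x ≤ 0) (hy : 0 ≤ y) :
    x ≠ 1 ∧ y ≠ -1 ∧ birat a (x, y) ∉ intRone ∧ biratInv a (x, y) ∉ intRone := by
  refine ⟨by linarith, by linarith, fun h => ?_, fun h => ?_⟩
  · have := h.2; simp [birat] at this; linarith
  · have := h.1; simp [biratInv] at this; linarith
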